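/- Suppose ρ ∈ (0,1), δ ≥ 0, and t, ∇ are real random variables with 1/(e²+1) ≤ t ≤ e²/(e²+1) a.s. and E[|∇ - E[∇]|] ≤ δ. If E[∇] = (2/(1-ρ))·c for a constant c ≠ 0 with |c| > 5(1-ρ)δ/2, then -E[t·∇] has the opposite sign of c. -/

import Mathlib

open MeasureTheory

theorem bpr_gradient_nonvanishing
    {Ω : Type*} [MeasureSpace Ω] [IsProbabilityMeasure (volume : Measure Ω)]
    (ρ δ c : ℝ) (hρ : ρ ∈ Set.Ioo (0 : ℝ) 1) (hδ : 0 ≤ δ)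
    (t grad : Ω → ℝ)
    (ht : ∀ᵐ ω, t ω ∈ Set.Icc (1 / (Real.exp 2 + 1)) (Real.exp 2 / (Real.exp 2 + 1)))
    (hti : Integrable t) (hgi : Integrable grad)
    (htgi : Integrable (fun ω => t ω * grad ω))
    (hdev : (∫ ω, |grad ω - ∫ ω', grad ω'|) ≤ δ)
    (hmean : (∫ ω, grad ω) = (2 / (1 - ρ)) * c)
    (hc : c ≠ 0) (hcδ : |c| > 5 * (1 - ρ) * δ / 2) :
    (0 < c → -(∫ ω, t ω * grad ω) < 0) ∧
    (c < 0 → 0 < -(∫ ω, t ω * grad ω)) := by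
  have hE : (0:ℝ) < Real.exp 2 := Real.exp_pos 2
  have hE1 : (0:ℝ) < Real.exp 2 + 1 := by linarith
  have hEge1 : (1:ℝ) ≤ Real.exp 2 := Real.one_le_exp (by norm_num)
  have hE11 : Real.exp 2 < 11 := by
    have h2 : Real.exp 2 = Real.exp 1 * Real.exp 1 := by
      rw [← Real.exp_add]; norm_num
    have h9 := Real.exp_one_lt_d9
    nlinarith [Real.exp_pos 1]
  have hρ1 : 0 < 1 - ρ := by have := hρ.2; linarith
  set μ := (∫ ω, grad ω) with hμ
  set K : ℝ := (Real.exp 2 - 1) / (2 * (Real.exp 2 + 1)) with hK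
  have hK1 : K = 1/2 - 1/(Real.exp 2 + 1) := by
    rw [hK]; field_simp; ring
  have hK2 : K = Real.exp 2 / (Real.exp 2 + 1) - 1/2 := by
    rw [hK]; field_simp; ring
  have hK0 : 0 ≤ K := by
    rw [hK]; apply div_nonneg <;> linarith
  -- lower bound on ∫ t
  have hIa : 1 / (Real.exp 2 + 1) ≤ ∫ ω, t ω := by
    have h := integral_mono_ae (integrable_const (1 / (Real.exp 2 + 1))) hti
      (ht.mono fun ω h => h.1)
    simpa using h
  -- decomposition
  have h1 : Integrable (fun ω => (t ω - 1/2) * (grad ω - μ)) := by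
    have heq : (fun ω => (t ω - 1/2) * (grad ω - μ)) =
        fun ω => (t ω * grad ω - μ * t ω) - ((1/2) * grad ω - μ/2) := by
      funext ω; ring
    rw [heq]
    exact (htgi.sub (hti.const_mul μ)).sub ((hgi.const_mul (1/2)).sub (integrable_const _))
  have hdec : (∫ ω, (t ω - 1/2) * (grad ω - μ)) =
      (∫ ω, t ω * grad ω) - μ * (∫ ω, t ω) := by
    have hrw : (fun ω => (t ω - 1/2) * (grad ω - μ)) =
        fun ω => (t ω * grad ω - μ * t ω) - ((1/2) * grad ω - μ/2) := by
      funext ω; ring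
    have hA : (∫ ω, ((t ω * grad ω - μ * t ω) - ((1/2) * grad ω - μ/2))) =
        (∫ ω, (t ω * grad ω - μ * t ω)) - ∫ ω, ((1/2) * grad ω - μ/2) :=
      integral_sub (htgi.sub (hti.const_mul μ))
        ((hgi.const_mul (1/2)).sub (integrable_const _))
    have hB : (∫ ω, (t ω * grad ω - μ * t ω)) =
        (∫ ω, t ω * grad ω) - ∫ ω, μ * t ω :=
      integral_sub htgi (hti.const_mul μ)
    have hC : (∫ ω, ((1/2) * grad ω - μ/2)) =
        (∫ ω, (1/2 : ℝ) * grad ω) - ∫ _ω, (μ/2 : ℝ) :=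
      integral_sub (hgi.const_mul (1/2)) (integrable_const _)
    have hD : (∫ ω, μ * t ω) = μ * ∫ ω, t ω := integral_const_mul μ t
    have hE' : (∫ ω, (1/2 : ℝ) * grad ω) = (1/2 : ℝ) * μ := by
      rw [integral_const_mul]
    have hF : (∫ _ω : Ω, (μ/2 : ℝ)) = μ/2 := by
      simp
    rw [hrw, hA, hB, hC, hD, hE', hF]
    ring
  -- bound on remainder
  have hbound : |∫ ω, (t ω - 1/2) * (grad ω - μ)| ≤ K * δ := by
    have h2 : |∫ ω, (t ω - 1/2) * (grad ω - μ)| ≤ ∫ ω, |(t ω - 1/2) * (grad ω - μ)| := by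
      have := norm_integral_le_integral_norm (μ := volume)
        (f := fun ω => (t ω - 1/2) * (grad ω - μ))
      simpa only [Real.norm_eq_abs] using this
    have h3 : (∫ ω, |(t ω - 1/2) * (grad ω - μ)|) ≤ ∫ ω, K * |grad ω - μ| := by
      apply integral_mono_ae h1.abs (((hgi.sub (integrable_const μ)).abs).const_mul K)
      filter_upwards [ht] with ω hω
      rw [abs_mul]
      apply mul_le_mul_of_nonneg_right _ (abs_nonneg _)
      rw [abs_le]
      constructor
      · have := hω.1
        rw [hK1]; linarith
      · have := hω.2
        rw [hK2]; linarith
    have h4 : (∫ ω, K * |grad ω - μ|) = K * ∫ ω, |grad ω - μ| :=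
      integral_const_mul K _
    have h5 : (∫ ω, |grad ω - μ|) ≤ δ := hdev
    calc |∫ ω, (t ω - 1/2) * (grad ω - μ)| ≤ ∫ ω, K * |grad ω - μ| := le_trans h2 h3
      _ = K * ∫ ω, |grad ω - μ| := h4
      _ ≤ K * δ := mul_le_mul_of_nonneg_left h5 hK0
  have hR1 : (∫ ω, t ω * grad ω) ≥ μ * (∫ ω, t ω) - K * δ := by
    have := abs_le.mp hbound
    linarith [this.1, hdec]
  have hR2 : (∫ ω, t ω * grad ω) ≤ μ * (∫ ω, t ω) + K * δ := by
    have := abs_le.mp hbound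
    linarith [this.2, hdec]
  have hK5 : K ≤ 5 / (Real.exp 2 + 1) := by
    rw [hK, div_le_div_iff₀ (by linarith) hE1]
    nlinarith
  have hKδ : K * δ ≤ 5 * δ / (Real.exp 2 + 1) := by
    calc K * δ ≤ (5 / (Real.exp 2 + 1)) * δ := mul_le_mul_of_nonneg_right hK5 hδ
      _ = 5 * δ / (Real.exp 2 + 1) := by ring
  constructor
  · intro hc0
    have hμ5 : μ > 5 * δ := by
      have habs : |c| = c := abs_of_pos hc0
      rw [habs] at hcδ
      rw [hmean, gt_iff_lt, ← sub_pos]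
      have heq : 2 / (1 - ρ) * c - 5 * δ = (2 * c - 5 * (1-ρ) * δ) / (1 - ρ) := by
        field_simp
      rw [heq]
      apply div_pos (by linarith) hρ1
    have hμ0 : 0 < μ := by linarith
    have hμI : μ * (∫ ω, t ω) ≥ μ * (1 / (Real.exp 2 + 1)) :=
      mul_le_mul_of_nonneg_left hIa (le_of_lt hμ0)
    have h5 : μ * (1 / (Real.exp 2 + 1)) > 5 * δ * (1 / (Real.exp 2 + 1)) := by
      apply mul_lt_mul_of_pos_right hμ5
      positivity
    have heq2 : 5 * δ * (1 / (Real.exp 2 + 1)) = 5 * δ / (Real.exp 2 + 1) := by ring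
    linarith [hR1, hμI, h5, hKδ, heq2]
  · intro hc0
    have hμ5 : μ < -(5 * δ) := by
      have habs : |c| = -c := abs_of_neg hc0
      rw [habs] at hcδ
      rw [hmean, ← sub_neg]
      have heq : 2 / (1 - ρ) * c - -(5 * δ) = (2 * c + 5 * (1-ρ) * δ) / (1 - ρ) := by
        field_simp; ring
      rw [heq]
      apply div_neg_of_neg_of_pos (by linarith) hρ1
    have hμ0 : μ < 0 := by linarith
    have hμI : μ * (∫ ω, t ω) ≤ μ * (1 / (Real.exp 2 + 1)) :=
      mul_le_mul_of_nonpos_left hIa (le_of_lt hμ0)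
    have h5 : μ * (1 / (Real.exp 2 + 1)) < -(5 * δ) * (1 / (Real.exp 2 + 1)) := by
      apply mul_lt_mul_of_pos_right hμ5
      positivity
    have heq2 : -(5 * δ) * (1 / (Real.exp 2 + 1)) = -(5 * δ / (Real.exp 2 + 1)) := by ring
    linarith [hR2, hμI, h5, hKδ, heq2]
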